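/- arXiv:1007.2246 — 4 statements merged into one kernel-verified Lean document; each statement's English description precedes it below -/
import Mathlib

section
/- For all integers n ≥ 0 and real x, the Hermite polynomials satisfy H_{2n}(x) = (-1)^n 2^{2n} n! L_n^{(-1/2)}(x^2), where L_n^{(α)} denotes the generalized Laguerre polynomial. -/
/-- Physicists' Hermite polynomials. -/
noncomputable def H : ℕ → ℝ → ℝ
  | 0, _ => 1
  | 1, x => 2 * x
  | (n + 2), x => 2 * x * H (n + 1) x - 2 * (n + 1) * H n x

/-- Generalized Laguerre polynomial `L_n^{(α)}`. -/
noncomputable def lag (α : ℝ) (n : ℕ) (x : ℝ) : ℝ :=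
  ∑ k ∈ Finset.range (n + 1),
    (-1) ^ k * (Real.Gamma (n + α + 1) / (Real.Gamma (k + α + 1) * (Nat.factorial (n - k)))) *
      x ^ k / (Nat.factorial k)

lemma H_add_two (m : ℕ) (x : ℝ) : H (m+2) x = 2*x*H (m+1) x - 2*(m+1)*H m x := rfl

lemma lag_zero (α : ℝ) (h : Real.Gamma (α+1) ≠ 0) (t : ℝ) : lag α 0 t = 1 := by
  simp [lag]
  exact h

lemma R2 (n : ℕ) (t : ℝ) :
    lag (1/2) (n+1) t = lag (-1/2) (n+1) t + lag (1/2) n t := by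
  unfold lag
  rw [Finset.sum_range_succ, Finset.sum_range_succ (n := n+1)]
  conv_rhs => rw [add_right_comm]
  congr 1
  · rw [← Finset.sum_add_distrib]
    apply Finset.sum_congr rfl
    intro k hk
    have hk' : k ≤ n := Nat.lt_succ_iff.mp (Finset.mem_range.mp hk)
    have h1 : n + 1 - k = (n - k) + 1 := by omega
    rw [h1, Nat.factorial_succ]
    push_cast [Nat.cast_sub hk']
    have e1 : ((n:ℝ)+1) + 1/2 + 1 = ((n:ℝ) + 1/2 + 1) + 1 := by ring
    have e3 : ((n:ℝ)+1) + -1/2 + 1 = (n:ℝ) + 1/2 + 1 := by ring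
    have e4 : ((k:ℝ)) + -1/2 + 1 = (k:ℝ) + 1/2 := by ring
    rw [e1, e3, e4, Real.Gamma_add_one (s := (n:ℝ) + 1/2 + 1) (by positivity),
      Real.Gamma_add_one (s := (k:ℝ) + 1/2) (by positivity)]
    have hb : Real.Gamma ((k:ℝ) + 1/2) ≠ 0 := ne_of_gt (Real.Gamma_pos_of_pos (by positivity))
    have hfac : ((n-k).factorial : ℝ) ≠ 0 := by positivity
    have hkfac : (k.factorial : ℝ) ≠ 0 := by positivity
    have hck : (k:ℝ) ≤ n := Nat.cast_le.mpr hk'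
    have hm : ((n:ℝ) - k + 1) ≠ 0 := by nlinarith
    field_simp
    ring
  · rw [Nat.sub_self, Nat.factorial_zero]
    have g1 : Real.Gamma (((n+1:ℕ):ℝ)+1/2+1) ≠ 0 := ne_of_gt (Real.Gamma_pos_of_pos (by positivity))
    have g2 : Real.Gamma (((n+1:ℕ):ℝ)+(-1/2)+1) ≠ 0 := ne_of_gt (Real.Gamma_pos_of_pos (by
      have h : (0:ℝ) < ((n+1:ℕ):ℝ) := by positivity
      linarith))
    simp only [Nat.cast_one, mul_one, div_self g1, div_self g2]

lemma sum_shift (f g h : ℕ → ℝ) (n : ℕ)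
    (h0 : h 0 = g 0)
    (hmid : ∀ k < n, f k = h (k+1) - g (k+1))
    (hlast : f n = - g (n+1)) :
    ∑ k ∈ Finset.range (n+1), f k
      = ∑ k ∈ Finset.range (n+1), h k - ∑ k ∈ Finset.range (n+2), g k := by
  rw [Finset.sum_range_succ, Finset.sum_range_succ' h n, Finset.sum_range_succ' g (n+1),
    Finset.sum_range_succ]
  have e : ∑ k ∈ Finset.range n, f k = ∑ k ∈ Finset.range n, (h (k+1) - g (k+1)) :=
    Finset.sum_congr rfl (fun k hk => hmid k (Finset.mem_range.mp hk))
  rw [e, Finset.sum_sub_distrib, h0, hlast]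
  ring

lemma R1 (n : ℕ) (t : ℝ) :
    t * lag (1/2) n t = ((n:ℝ) + 1/2) * lag (-1/2) n t - ((n:ℝ)+1) * lag (-1/2) (n+1) t := by
  unfold lag
  rw [Finset.mul_sum, Finset.mul_sum, Finset.mul_sum]
  apply sum_shift
  · -- h 0 = g 0
    have e1 : ((0:ℕ):ℝ) + (-1/2) + 1 = (1/2 : ℝ) := by push_cast; ring
    have e2 : ((n+1:ℕ):ℝ) + (-1/2) + 1 = ((n:ℝ) + (-1/2) + 1) + 1 := by push_cast; ring
    rw [e1, e2, Real.Gamma_add_one (s := (n:ℝ) + (-1/2) + 1) (by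
      have h : (0:ℝ) ≤ (n:ℝ) := Nat.cast_nonneg n
      intro hc; nlinarith), Nat.sub_zero, Nat.sub_zero, Nat.factorial_succ]
    have hg : Real.Gamma ((1:ℝ)/2) ≠ 0 := ne_of_gt (Real.Gamma_pos_of_pos (by norm_num))
    have hfac : ((n.factorial:ℕ):ℝ) ≠ 0 := by positivity
    push_cast
    field_simp
    ring
  · -- hmid
    intro k hk
    have hk1 : k + 1 ≤ n := hk
    have e1 : n - k = (n - (k+1)) + 1 := by omega
    have e2 : n + 1 - (k+1) = (n - (k+1)) + 1 := by omega
    rw [e1, e2, Nat.factorial_succ, Nat.factorial_succ k]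
    have g1 : ((k+1:ℕ):ℝ) + (-1/2) + 1 = ((k:ℝ) + 1/2) + 1 := by push_cast; ring
    have g2 : ((k:ℝ)) + 1/2 + 1 = ((k:ℝ) + 1/2) + 1 := by ring
    have g3 : ((n+1:ℕ):ℝ) + (-1/2) + 1 = ((n:ℝ) + 1/2) + 1 := by push_cast; ring
    have g4 : ((n:ℝ)) + 1/2 + 1 = ((n:ℝ) + 1/2) + 1 := by ring
    have g5 : ((n:ℝ)) + (-1/2) + 1 = (n:ℝ) + 1/2 := by ring
    rw [g1, g2, g3, g4, g5, Real.Gamma_add_one (s := (k:ℝ) + 1/2) (by positivity),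
      Real.Gamma_add_one (s := (n:ℝ) + 1/2) (by positivity)]
    have hbk : Real.Gamma ((k:ℝ) + 1/2) ≠ 0 := ne_of_gt (Real.Gamma_pos_of_pos (by positivity))
    have hbn : Real.Gamma ((n:ℝ) + 1/2) ≠ 0 := ne_of_gt (Real.Gamma_pos_of_pos (by positivity))
    have hfac : (((n-(k+1)).factorial:ℕ):ℝ) ≠ 0 := by positivity
    have hkfac : ((k.factorial:ℕ):ℝ) ≠ 0 := by positivity
    have hck : ((k:ℝ)+1) ≤ (n:ℝ) := by exact_mod_cast hk1
    have hmk : ((n:ℝ) - ((k:ℝ)+1) + 1) ≠ 0 := by nlinarith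
    push_cast [Nat.cast_sub hk1]
    field_simp
    ring
  · -- hlast
    rw [Nat.sub_self, Nat.sub_self, Nat.factorial_zero, Nat.factorial_succ]
    have g1 : Real.Gamma ((n:ℝ) + 1/2 + 1) ≠ 0 := ne_of_gt (Real.Gamma_pos_of_pos (by positivity))
    have g2 : Real.Gamma (((n+1:ℕ):ℝ) + (-1/2) + 1) ≠ 0 := ne_of_gt (Real.Gamma_pos_of_pos (by
      have h : (0:ℝ) < ((n+1:ℕ):ℝ) := by positivity
      linarith))
    rw [Nat.cast_one, mul_one, mul_one, div_self g1, div_self g2]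
    have hfac : ((n.factorial:ℕ):ℝ) ≠ 0 := by positivity
    push_cast
    field_simp
    ring

lemma key (x : ℝ) : ∀ n : ℕ,
    H (2 * n) x = (-1) ^ n * 2 ^ (2 * n) * (Nat.factorial n) * lag (-1/2) n (x ^ 2) ∧
    H (2 * n + 1) x = (-1) ^ n * 2 ^ (2 * n + 1) * (Nat.factorial n) * x * lag (1/2) n (x ^ 2) := by
  intro n
  induction n with
  | zero =>
    constructor
    · show H 0 x = _
      rw [lag_zero (-1/2) (by norm_num; exact ne_of_gt (Real.Gamma_pos_of_pos (by norm_num)))]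
      show (1:ℝ) = _
      norm_num [Nat.factorial]
    · show H 1 x = _
      rw [lag_zero (1/2) (by norm_num; exact ne_of_gt (Real.Gamma_pos_of_pos (by norm_num)))]
      show 2 * x = _
      norm_num [Nat.factorial]
  | succ n ih =>
    obtain ⟨ihe, iho⟩ := ih
    have hR1 := R1 n (x^2)
    have hR2 := R2 n (x^2)
    have heven : H (2 * (n+1)) x
        = (-1) ^ (n+1) * 2 ^ (2 * (n+1)) * ((n+1).factorial) * lag (-1/2) (n+1) (x ^ 2) := by
      have h2 : 2 * (n+1) = 2*n + 2 := by ring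
      rw [h2, H_add_two, ihe, iho]
      push_cast [Nat.factorial_succ]
      linear_combination ((-1:ℝ)^n * 2^(2*n+2) * (n.factorial : ℝ)) * hR1
    constructor
    · exact heven
    · have h3 : 2 * (n+1) + 1 = (2*n+1) + 2 := by ring
      rw [h3, H_add_two, iho]
      have h4 : 2*n+1+1 = 2*(n+1) := by ring
      rw [h4, heven]
      push_cast [Nat.factorial_succ]
      linear_combination ((-1:ℝ)^n * 2^(2*n+3) * ((n:ℝ)+1) * (n.factorial : ℝ) * x) * hR2

theorem hermite_even_eq_laguerre (n : ℕ) (x : ℝ) :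
    H (2 * n) x = (-1) ^ n * 2 ^ (2 * n) * (Nat.factorial n) * lag (-1/2) n (x ^ 2) := by
  exact (key x n).1
end

section
/- For all integers k, ℓ ≥ 0 and real t, ∫_ℝ H_{2k}(x+t/2) H_{2ℓ}(x-t/2) e^{-(x+t/2)^2/2 - (x-t/2)^2/2} dx = e^{-t^2/4} √π Σ_{m=0}^{2 min(k,ℓ)} C(2k,m) C(2ℓ,m) m! (-2)^m t^{2k+2ℓ-2m}. -/
open Real MeasureTheory Filter Finset Topology

lemma H_zero (x : ℝ) : H 0 x = 1 := rfl
lemma H_one (x : ℝ) : H 1 x = 2 * x := rfl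
lemma H_rec (n : ℕ) (x : ℝ) : H (n+2) x = 2 * x * H (n+1) x - 2 * (n+1) * H n x := rfl

lemma twoXH : ∀ (i : ℕ) (x : ℝ), 2 * x * H i x = H (i+1) x + 2 * i * H (i-1) x
  | 0, x => by simp [H_zero, H_one]
  | (i+1), x => by rw [H_rec]; push_cast; ring_nf

lemma rec2 {P : ℕ → Prop} (h0 : P 0) (h1 : P 1)
    (ih : ∀ n, P n → P (n+1) → P (n+2)) : ∀ n, P n := by
  have key : ∀ n, P n ∧ P (n+1) := by
    intro n
    induction n with
    | zero => exact ⟨h0, h1⟩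
    | succ k ihk => exact ⟨ihk.2, ih k ihk.1 ihk.2⟩
  exact fun n => (key n).1

lemma H_add : ∀ (n : ℕ) (x y : ℝ),
    H n (x + y) = ∑ i ∈ range (n+1), (n.choose i : ℝ) * H i x * (2*y)^(n-i) := by
  refine rec2 ?_ ?_ ?_
  · intro x y; simp [H_zero]
  · intro x y; simp [H_zero, H_one, Finset.sum_range_succ]; ring
  · intro n ih0 ih1 x y
    rw [H_rec, ih1, ih0]
    set A := ∑ i ∈ range (n+2), ((n+1).choose i : ℝ) * H (i+1) x * (2*y)^(n+1-i) with hA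
    set B := ∑ i ∈ range (n+2), ((n+1).choose i : ℝ) * H i x * (2*y)^(n+2-i) with hB
    have e1 : 2*(x+y) * ∑ i ∈ range (n+2), ((n+1).choose i : ℝ) * H i x * (2*y)^(n+1-i)
        = A + (∑ i ∈ range (n+2), ((n+1).choose i : ℝ) * (2*i) * H (i-1) x * (2*y)^(n+1-i)) + B := by
      rw [Finset.mul_sum, hA, hB, ← Finset.sum_add_distrib, ← Finset.sum_add_distrib]
      refine Finset.sum_congr rfl ?_
      intro i hi
      have hile : i ≤ n + 1 := Nat.lt_succ_iff.mp (Finset.mem_range.mp hi)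
      have hpow : (2*y)^(n+2-i) = (2*y)^(n+1-i) * (2*y) := by
        rw [← pow_succ]
        congr 1
        omega
      have h2x : 2 * x * H i x = H (i+1) x + 2 * i * H (i-1) x := twoXH i x
      calc 2*(x+y) * (((n+1).choose i : ℝ) * H i x * (2*y)^(n+1-i))
          = ((n+1).choose i : ℝ) * (2 * x * H i x) * (2*y)^(n+1-i)
            + ((n+1).choose i : ℝ) * H i x * ((2*y)^(n+1-i) * (2*y)) := by ring
        _ = _ := by rw [h2x, hpow]; ring
    rw [e1]
    have e2 : ∑ i ∈ range (n+2), ((n+1).choose i : ℝ) * (2*i) * H (i-1) x * (2*y)^(n+1-i)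
        = 2*(n+1) * ∑ i ∈ range (n+1), (n.choose i : ℝ) * H i x * (2*y)^(n-i) := by
      rw [Finset.sum_range_succ', Finset.mul_sum]
      simp only [Nat.cast_zero, mul_zero, zero_mul, mul_zero, add_zero]
      refine Finset.sum_congr rfl ?_
      intro j hj
      show (((n+1).choose (j+1) : ℝ)) * (2*((j+1:ℕ):ℝ)) * H ((j+1)-1) x * (2*y)^(n+1-(j+1))
          = 2*((n:ℝ)+1) * ((n.choose j : ℝ) * H j x * (2*y)^(n-j))
      have hcc : ((n+1).choose (j+1) : ℝ) * ((j:ℝ)+1) = ((n:ℝ)+1) * (n.choose j) := by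
        have h := Nat.add_one_mul_choose_eq n j
        have h' : ((n+1) * n.choose j : ℕ) = ((n+1).choose (j+1) * (j+1) : ℕ) := h
        exact_mod_cast h'.symm
      have h1 : (j+1) - 1 = j := rfl
      have h2 : n + 1 - (j+1) = n - j := by omega
      rw [h1, h2]
      push_cast
      linear_combination (2 * H j x * (2*y)^(n-j)) * hcc
    rw [e2]
    set B' := ∑ k ∈ range (n+1), ((n+1).choose (k+1) : ℝ) * H (k+1) x * (2*y)^(n+1-k) with hB'
    have hB2 : B = B' + H 0 x * (2*y)^(n+2) := by
      rw [hB, Finset.sum_range_succ']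
      simp only [Nat.succ_sub_succ, Nat.choose_zero_right, Nat.cast_one, one_mul, Nat.sub_zero]
      rfl
    have hT : ∑ i ∈ range (n+3), ((n+2).choose i : ℝ) * H i x * (2*y)^(n+2-i)
        = A + B' + H 0 x * (2*y)^(n+2) := by
      rw [Finset.sum_range_succ']
      simp only [Nat.succ_sub_succ, Nat.choose_succ_succ (n+1), Nat.cast_add, add_mul,
        Nat.choose_zero_right, Nat.cast_one, one_mul, Nat.sub_zero]
      rw [Finset.sum_add_distrib]
      have h3 : ∑ k ∈ range (n+2), ((n+1).choose (k+1) : ℝ) * H (k+1) x * (2*y)^(n+1-k)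
          = B' := by
        rw [Finset.sum_range_succ, hB']
        simp [Nat.choose_eq_zero_of_lt (by omega : n + 1 < n + 2)]
      rw [h3, hA]
    rw [show n+1+1+1 = n+3 from rfl, hT, hB2]
    ring

lemma H_hasDerivAt : ∀ (n : ℕ) (x : ℝ), HasDerivAt (H n) (2 * n * H (n-1) x) x := by
  refine rec2 ?_ ?_ ?_
  · intro x
    simp only [Nat.cast_zero, mul_zero, zero_mul]
    exact (hasDerivAt_const x (1:ℝ)).congr_of_eventuallyEq
      (Eventually.of_forall fun y => (H_zero y))
  · intro x
    have : HasDerivAt (fun y : ℝ => 2 * y) 2 x := by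
      simpa using (hasDerivAt_id x).const_mul (2:ℝ)
    refine (this.congr_of_eventuallyEq (Eventually.of_forall fun y => (H_one y))).congr_deriv ?_
    simp [H_zero]
  · intro n ih0 ih1 x
    have h1 : HasDerivAt (fun y : ℝ => 2 * y * H (n+1) y - 2 * (n+1) * H n y)
        (2 * H (n+1) x + 2 * x * (2 * (n+1) * H n x) - 2 * (n+1) * (2 * n * H (n-1) x)) x := by
      have ha : HasDerivAt (fun y : ℝ => 2 * y) 2 x := by
        simpa using (hasDerivAt_id x).const_mul (2:ℝ)
      have hb := ha.mul (ih1 x)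
      have hc := (ih0 x).const_mul (2 * ((n:ℝ)+1))
      simpa only [Nat.add_sub_cancel, Nat.cast_add, Nat.cast_one, Pi.mul_def, Pi.sub_def] using
        (hb.sub hc).congr_deriv (by push_cast; ring)
    refine (h1.congr_of_eventuallyEq (Eventually.of_forall fun y => (H_rec n y))).congr_deriv ?_
    have key : 2 * x * H n x = H (n+1) x + 2 * n * H (n-1) x := twoXH n x
    have h2 : (n + 2 : ℕ) - 1 = n + 1 := rfl
    rw [h2]
    push_cast
    nlinarith [key]

lemma H_continuous (n : ℕ) : Continuous (H n) :=
  continuous_iff_continuousAt.mpr fun x => (H_hasDerivAt n x).continuousAt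

lemma H_bound (n : ℕ) : ∃ C : ℝ, 0 ≤ C ∧ ∀ x : ℝ, |H n x| ≤ C * (1 + |x|)^n := by
  induction n using rec2 with
  | h0 => exact ⟨1, zero_le_one, fun x => by simp [H_zero]⟩
  | h1 => exact ⟨2, by norm_num, fun x => by
      rw [H_one, pow_one, abs_mul]
      have := abs_nonneg x
      rw [abs_two]
      nlinarith⟩
  | ih n ih0 ih1 =>
    obtain ⟨C0, hC0, h0⟩ := ih0
    obtain ⟨C1, hC1, h1⟩ := ih1
    refine ⟨2*C1 + 2*(n+1)*C0, by positivity, fun x => ?_⟩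
    have hb : (1:ℝ) ≤ 1 + |x| := by simp [abs_nonneg]
    have hbn : (0:ℝ) ≤ 1 + |x| := by linarith
    have e1 : |H (n+2) x| ≤ 2*|x| * |H (n+1) x| + 2*(n+1) * |H n x| := by
      rw [H_rec]
      refine (abs_sub _ _).trans ?_
      rw [abs_mul, abs_mul, abs_mul, abs_two, abs_mul, abs_two]
      have : |((n:ℝ)+1)| = (n:ℝ)+1 := abs_of_nonneg (by positivity)
      push_cast
      rw [this]
    have e2 : 2*|x| * |H (n+1) x| ≤ 2*C1*(1+|x|)^(n+2) := by
      have := h1 x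
      have hxb : |x| ≤ 1 + |x| := by linarith
      calc 2*|x| * |H (n+1) x| ≤ 2*(1+|x|) * (C1 * (1+|x|)^(n+1)) := by
            apply mul_le_mul (by linarith) this (abs_nonneg _) (by positivity)
        _ = 2*C1*(1+|x|)^(n+2) := by ring
    have e3 : 2*((n:ℝ)+1) * |H n x| ≤ 2*((n:ℝ)+1)*C0*(1+|x|)^(n+2) := by
      have hmono : (1+|x|)^n ≤ (1+|x|)^(n+2) := pow_le_pow_right₀ hb (by omega)
      have := h0 x
      have : |H n x| ≤ C0 * (1+|x|)^(n+2) := le_trans this (by nlinarith [pow_nonneg hbn n])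
      nlinarith [this]
    calc |H (n+2) x| ≤ 2*|x| * |H (n+1) x| + 2*(n+1) * |H n x| := e1
      _ ≤ 2*C1*(1+|x|)^(n+2) + 2*((n:ℝ)+1)*C0*(1+|x|)^(n+2) := by push_cast; linarith
      _ = (2*C1 + 2*(n+1)*C0) * (1+|x|)^(n+2) := by ring

lemma gauss_bound (N : ℕ) : ∀ x : ℝ, (1 + |x|)^N * exp (-x^2) ≤ (2*N+2)^N * exp (-(1/2) * x^2) := by
  intro x
  set a : ℝ := 2*N+2 with ha
  have hapos : (0:ℝ) < a := by positivity
  have h1 : (1 + |x|)^N ≤ (2 + x^2)^N := by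
    apply pow_le_pow_left₀ (by positivity)
    nlinarith [sq_abs x, sq_nonneg (|x| - 1)]
  have h2 : (2 + x^2)^N ≤ (a * (1 + x^2/a))^N := by
    apply pow_le_pow_left₀ (by positivity)
    rw [mul_add, mul_one, mul_div_cancel₀ _ (ne_of_gt hapos)]
    simp [ha]
  have h3 : (a * (1 + x^2/a))^N = a^N * (1 + x^2/a)^N := mul_pow _ _ _
  have h4 : (1 + x^2/a)^N ≤ exp (x^2/a) ^ N := by
    apply pow_le_pow_left₀ (by positivity)
    linarith [add_one_le_exp (x^2/a)]
  have h5 : exp (x^2/a) ^ N = exp (N * (x^2/a)) := by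
    rw [← Real.exp_nat_mul]
  have h6 : exp ((N:ℝ) * (x^2/a)) ≤ exp (x^2/2) := by
    apply Real.exp_le_exp.mpr
    rw [mul_div_assoc'] at *
    rw [div_le_div_iff₀ hapos two_pos]
    nlinarith [sq_nonneg x, Nat.cast_nonneg (α := ℝ) N]
  have key : (1 + |x|)^N ≤ a^N * exp (x^2/2) := by
    calc (1 + |x|)^N ≤ (a * (1 + x^2/a))^N := h1.trans h2
      _ = a^N * (1 + x^2/a)^N := h3
      _ ≤ a^N * exp (x^2/2) := by
          have := h4.trans (le_of_eq h5 |>.trans h6)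
          exact mul_le_mul_of_nonneg_left this (by positivity)
  have hexp : exp (x^2/2) * exp (-x^2) = exp (-(1/2) * x^2) := by
    rw [← Real.exp_add]; ring_nf
  calc (1 + |x|)^N * exp (-x^2) ≤ (a^N * exp (x^2/2)) * exp (-x^2) :=
        mul_le_mul_of_nonneg_right key (exp_nonneg _)
    _ = a^N * exp (-(1/2) * x^2) := by rw [mul_assoc, hexp]

lemma HH_bound (m n : ℕ) : ∃ C : ℝ, 0 ≤ C ∧
    ∀ x : ℝ, ‖H m x * H n x * exp (-x^2)‖ ≤ C * exp (-(1/2) * x^2) := by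
  obtain ⟨Cm, hCm, hm⟩ := H_bound m
  obtain ⟨Cn, hCn, hn⟩ := H_bound n
  refine ⟨Cm * Cn * (2*(m+n)+2)^(m+n), by positivity, fun x => ?_⟩
  have hb : (0:ℝ) ≤ 1 + |x| := by positivity
  have h1 : ‖H m x * H n x * exp (-x^2)‖ ≤ Cm * Cn * (1+|x|)^(m+n) * exp (-x^2) := by
    rw [norm_mul, norm_mul, Real.norm_eq_abs, Real.norm_eq_abs, Real.norm_eq_abs,
      abs_exp, pow_add]
    have := mul_le_mul (hm x) (hn x) (abs_nonneg _) (by positivity)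
    nlinarith [exp_nonneg (-x^2), this]
  have h2 := gauss_bound (m+n) x
  calc ‖H m x * H n x * exp (-x^2)‖ ≤ Cm * Cn * ((1+|x|)^(m+n) * exp (-x^2)) := by
        rw [← mul_assoc]; exact h1
    _ ≤ Cm * Cn * ((2*(m+n)+2)^(m+n) * exp (-(1/2) * x^2)) := by
        apply mul_le_mul_of_nonneg_left _ (by positivity)
        convert h2 using 3
        · rfl
        · push_cast; ring
    _ = Cm * Cn * (2*(m+n)+2)^(m+n) * exp (-(1/2) * x^2) := by push_cast; ring

lemma cont_HH (m n : ℕ) : Continuous (fun x : ℝ => H m x * H n x * exp (-x^2)) := by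
  exact ((H_continuous m).mul (H_continuous n)).mul
    (Real.continuous_exp.comp (continuous_pow 2).neg)

lemma integrable_HH (m n : ℕ) : Integrable (fun x : ℝ => H m x * H n x * exp (-x^2)) := by
  obtain ⟨C, hC, hb⟩ := HH_bound m n
  exact Integrable.mono'
    ((integrable_exp_neg_mul_sq (by norm_num : (0:ℝ) < 1/2)).const_mul C)
    (cont_HH m n).aestronglyMeasurable (Eventually.of_forall hb)

lemma tendsto_gauss_atTop : Tendsto (fun x : ℝ => exp (-(1/2) * x^2)) atTop (𝓝 0) := by
  have h1 : Tendsto (fun x : ℝ => (1/2) * x^2) atTop atTop :=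
    Tendsto.const_mul_atTop (by norm_num) (tendsto_pow_atTop two_ne_zero)
  have h2 : Tendsto (fun x : ℝ => -((1/2) * x^2)) atTop atBot := tendsto_neg_atTop_atBot.comp h1
  have h3 := Real.tendsto_exp_atBot.comp h2
  refine h3.congr fun x => ?_
  simp only [Function.comp_apply]
  ring_nf

lemma tendsto_gauss_atBot : Tendsto (fun x : ℝ => exp (-(1/2) * x^2)) atBot (𝓝 0) := by
  have := tendsto_gauss_atTop.comp tendsto_neg_atBot_atTop
  refine this.congr fun x => ?_
  simp [Function.comp, neg_sq]

lemma tendsto_HH_atTop (m n : ℕ) :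
    Tendsto (fun x : ℝ => H m x * H n x * exp (-x^2)) atTop (𝓝 0) := by
  obtain ⟨C, hC, hb⟩ := HH_bound m n
  exact squeeze_zero_norm hb (by simpa using tendsto_gauss_atTop.const_mul C)

lemma tendsto_HH_atBot (m n : ℕ) :
    Tendsto (fun x : ℝ => H m x * H n x * exp (-x^2)) atBot (𝓝 0) := by
  obtain ⟨C, hC, hb⟩ := HH_bound m n
  exact squeeze_zero_norm hb (by simpa using tendsto_gauss_atBot.const_mul C)

lemma HH_hasDerivAt (m n : ℕ) (x : ℝ) :
    HasDerivAt (fun y : ℝ => H m y * H n y * exp (-y^2))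
      ((2*m*H (m-1) x * H n x + 2*n*H m x * H (n-1) x - 2*x*(H m x * H n x)) * exp (-x^2)) x := by
  have hexp : HasDerivAt (fun y : ℝ => exp (-y^2)) (exp (-x^2) * (-(2*x))) x := by
    have h1 : HasDerivAt (fun y : ℝ => -y^2) (-(2*x)) x := by
      simpa [Pi.neg_def] using (hasDerivAt_pow 2 x).neg
    exact h1.exp
  have := ((H_hasDerivAt m x).mul (H_hasDerivAt n x)).mul hexp
  refine this.congr_deriv ?_
  simp only [Pi.mul_apply]
  ring

lemma integrable_deriv_HH (m n : ℕ) :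
    Integrable (fun x : ℝ =>
      (2*m*H (m-1) x * H n x + 2*n*H m x * H (n-1) x - 2*x*(H m x * H n x)) * exp (-x^2)) := by
  have h : ∀ x : ℝ,
      (2*m*H (m-1) x * H n x + 2*n*H m x * H (n-1) x - 2*x*(H m x * H n x)) * exp (-x^2)
      = 2*m*(H (m-1) x * H n x * exp (-x^2)) + 2*n*(H m x * H (n-1) x * exp (-x^2))
        - (H (m+1) x * H n x * exp (-x^2) + 2*m*(H (m-1) x * H n x * exp (-x^2))) := by
    intro x
    have h2 : 2*x*H m x = H (m+1) x + 2*m*H (m-1) x := twoXH m x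
    have : 2*x*(H m x * H n x) = (H (m+1) x + 2*m*H (m-1) x) * H n x := by
      rw [← h2]; ring
    rw [this]; ring
  refine Integrable.congr ?_ (Eventually.of_forall fun x => (h x).symm)
  exact (((integrable_HH (m-1) n).const_mul _).add ((integrable_HH m (n-1)).const_mul _)).sub
    ((integrable_HH (m+1) n).add ((integrable_HH (m-1) n).const_mul _))

lemma integral_deriv_HH (m n : ℕ) :
    ∫ x : ℝ, (2*m*H (m-1) x * H n x + 2*n*H m x * H (n-1) x - 2*x*(H m x * H n x)) * exp (-x^2)
      = 0 := by
  rw [MeasureTheory.integral_of_hasDerivAt_of_tendsto (HH_hasDerivAt m n)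
    (integrable_deriv_HH m n) (tendsto_HH_atBot m n) (tendsto_HH_atTop m n)]
  norm_num

lemma H_step (n m : ℕ) :
    ∫ x : ℝ, H m x * H (n+1) x * exp (-x^2)
      = 2*m * ∫ x : ℝ, H (m-1) x * H n x * exp (-x^2) := by
  have hpt : ∀ x : ℝ, H m x * H (n+1) x * exp (-x^2)
      = 2*m*(H (m-1) x * H n x * exp (-x^2))
        - (2*m*H (m-1) x * H n x + 2*n*H m x * H (n-1) x - 2*x*(H m x * H n x)) * exp (-x^2) := by
    intro x
    have h1 : 2*x*H n x = H (n+1) x + 2*n*H (n-1) x := twoXH n x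
    have h2 : H (n+1) x = 2*x*H n x - 2*n*H (n-1) x := by linarith
    rw [h2]; ring
  rw [integral_congr_ae (Eventually.of_forall hpt)]
  rw [integral_sub (((integrable_HH (m-1) n).const_mul _)) (by
    have h := ((integrable_HH (m-1) n).const_mul (2*(m:ℝ))).sub (integrable_HH m (n+1))
    refine h.congr (Eventually.of_forall fun x => ?_)
    have h1 : 2*x*H n x = H (n+1) x + 2*n*H (n-1) x := twoXH n x
    have h2 : H (n+1) x = 2*x*H n x - 2*n*H (n-1) x := by linarith
    simp only [Pi.sub_apply]
    rw [h2]; ring)]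
  rw [integral_deriv_HH m n, MeasureTheory.integral_const_mul]
  ring

lemma H_orth : ∀ n m : ℕ, ∫ x : ℝ, H m x * H n x * exp (-x^2)
    = if m = n then 2^n * n.factorial * Real.sqrt π else 0 := by
  intro n
  induction n with
  | zero =>
    intro m
    match m with
    | 0 =>
      have h0 : ∀ x : ℝ, H 0 x * H 0 x * exp (-x^2) = exp (-1 * x^2) := by
        intro x; rw [H_zero]; ring_nf
      rw [integral_congr_ae (Eventually.of_forall h0), integral_gaussian]
      norm_num
    | (p+1) =>
      have hcomm : ∀ x : ℝ, H (p+1) x * H 0 x * exp (-x^2) = H 0 x * H (p+1) x * exp (-x^2) := by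
        intro x; ring
      rw [integral_congr_ae (Eventually.of_forall hcomm), H_step p 0]
      simp
  | succ n ih =>
    intro m
    rw [H_step n m]
    match m with
    | 0 => simp
    | (p+1) =>
      have h1 : (p+1) - 1 = p := rfl
      rw [h1, ih p]
      by_cases hpn : p = n
      · subst hpn
        rw [if_pos rfl, if_pos rfl]
        rw [Nat.factorial_succ]
        push_cast
        ring
      · rw [if_neg hpn, if_neg (by omega : ¬ p + 1 = n + 1)]
        ring

theorem hermite_shifted_product_integral (k l : ℕ) (t : ℝ) :
    ∫ x : ℝ,
        H (2 * k) (x + t / 2) * H (2 * l) (x - t / 2) *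
          Real.exp (-(x + t / 2) ^ 2 / 2 - (x - t / 2) ^ 2 / 2) =
      Real.exp (-t ^ 2 / 4) * Real.sqrt Real.pi *
        ∑ m ∈ Finset.range (2 * min k l + 1),
          ((2 * k).choose m : ℝ) * ((2 * l).choose m : ℝ) * (Nat.factorial m) *
            (-2) ^ m * t ^ (2 * k + 2 * l - 2 * m) := by
  set c : ℕ → ℕ → ℝ := fun i j =>
    exp (-t^2/4) * ((2*k).choose i : ℝ) * ((2*l).choose j : ℝ) * t^(2*k-i) * (-t)^(2*l-j) with hc
  have hpt : ∀ x : ℝ, H (2*k) (x + t/2) * H (2*l) (x - t/2) * exp (-(x+t/2)^2/2 - (x-t/2)^2/2)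
      = ∑ i ∈ range (2*k+1), ∑ j ∈ range (2*l+1), c i j * (H i x * H j x * exp (-x^2)) := by
    intro x
    have e1 : exp (-(x+t/2)^2/2 - (x-t/2)^2/2) = exp (-t^2/4) * exp (-x^2) := by
      rw [← Real.exp_add]; ring_nf
    have e2 : H (2*k) (x + t/2)
        = ∑ i ∈ range (2*k+1), ((2*k).choose i : ℝ) * H i x * t^(2*k-i) := by
      rw [H_add]
      exact Finset.sum_congr rfl fun i _ => by rw [show 2*(t/2) = t from by ring]
    have e3 : H (2*l) (x - t/2)
        = ∑ j ∈ range (2*l+1), ((2*l).choose j : ℝ) * H j x * (-t)^(2*l-j) := by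
      rw [show x - t/2 = x + (-t/2) from by ring, H_add]
      exact Finset.sum_congr rfl fun j _ => by rw [show 2*(-t/2) = -t from by ring]
    rw [e1, e2, e3, Finset.sum_mul_sum, Finset.sum_mul]
    refine Finset.sum_congr rfl fun i _ => ?_
    rw [Finset.sum_mul]
    exact Finset.sum_congr rfl fun j _ => by rw [hc]; ring
  rw [integral_congr_ae (Eventually.of_forall hpt)]
  have hint : ∀ i j : ℕ, Integrable (fun x : ℝ => c i j * (H i x * H j x * exp (-x^2))) :=
    fun i j => (integrable_HH i j).const_mul _
  rw [integral_finset_sum _ (fun i _ => integrable_finset_sum _ (fun j _ => hint i j))]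
  calc ∑ i ∈ range (2*k+1), ∫ x : ℝ, ∑ j ∈ range (2*l+1), c i j * (H i x * H j x * exp (-x^2))
      = ∑ i ∈ range (2*k+1), ∑ j ∈ range (2*l+1),
          c i j * (if i = j then 2^j * j.factorial * Real.sqrt π else 0) := by
        refine Finset.sum_congr rfl fun i _ => ?_
        rw [integral_finset_sum _ (fun j _ => hint i j)]
        refine Finset.sum_congr rfl fun j _ => ?_
        rw [MeasureTheory.integral_const_mul, H_orth j i]
    _ = ∑ i ∈ range (2*k+1),
          (if i ∈ range (2*l+1) then c i i * (2^i * i.factorial * Real.sqrt π) else 0) := by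
        refine Finset.sum_congr rfl fun i _ => ?_
        rw [← Finset.sum_ite_eq (range (2*l+1)) i (fun j => c i j * (2^j * j.factorial * Real.sqrt π))]
        refine Finset.sum_congr rfl fun j _ => ?_
        by_cases hij : i = j
        · subst hij; simp
        · rw [if_neg hij, if_neg hij, mul_zero]
    _ = ∑ i ∈ range (min (2*k+1) (2*l+1)), c i i * (2^i * i.factorial * Real.sqrt π) := by
        rw [Finset.sum_ite_mem,
          show Finset.range (2*k+1) ∩ Finset.range (2*l+1) = Finset.range (min (2*k+1) (2*l+1)) from by
            ext x; simp [Nat.lt_min]]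
    _ = Real.exp (-t ^ 2 / 4) * Real.sqrt Real.pi *
        ∑ m ∈ Finset.range (2 * min k l + 1),
          ((2 * k).choose m : ℝ) * ((2 * l).choose m : ℝ) * (Nat.factorial m) *
            (-2) ^ m * t ^ (2 * k + 2 * l - 2 * m) := by
        rw [Finset.mul_sum]
        have hmin : min (2*k+1) (2*l+1) = 2 * min k l + 1 := by omega
        rw [hmin]
        refine Finset.sum_congr rfl fun i hi => ?_
        have hik : i ≤ 2*k := by have := Finset.mem_range.mp hi; omega
        have hil : i ≤ 2*l := by have := Finset.mem_range.mp hi; omega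
        rw [hc]
        have hneg : (-t)^(2*l-i) = (-1)^i * t^(2*l-i) := by
          rw [neg_pow]
          congr 1
          have h1 : ((-1:ℝ))^(2*l-i) * (-1:ℝ)^i = 1 := by
            rw [← pow_add, show 2*l - i + i = 2*l from by omega, pow_mul]; norm_num
          have h2 : ((-1:ℝ))^i * (-1:ℝ)^i = 1 := by
            rw [← pow_add, ← two_mul, pow_mul]; norm_num
          calc ((-1:ℝ))^(2*l-i) = ((-1:ℝ))^(2*l-i) * (((-1:ℝ))^i * ((-1:ℝ))^i) := by
                rw [h2, mul_one]
            _ = (((-1:ℝ))^(2*l-i) * ((-1:ℝ))^i) * ((-1:ℝ))^i := by ring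
            _ = ((-1:ℝ))^i := by rw [h1, one_mul]
        have hpow : t^(2*k-i) * t^(2*l-i) = t^(2*k+2*l-2*i) := by
          rw [← pow_add]
          congr 1
          omega
        have hneg2 : ((-2:ℝ))^i = (-1)^i * 2^i := by rw [neg_pow]
        calc exp (-t^2/4) * ((2*k).choose i : ℝ) * ((2*l).choose i : ℝ) * t^(2*k-i) * (-t)^(2*l-i)
              * (2^i * i.factorial * Real.sqrt π)
            = exp (-t^2/4) * Real.sqrt π * (((2*k).choose i : ℝ) * ((2*l).choose i : ℝ)
                * (i.factorial : ℝ) * ((-1)^i * 2^i) * (t^(2*k-i) * t^(2*l-i))) := by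
              rw [hneg]; ring
          _ = _ := by rw [hpow, ← hneg2]
end

section
/- In the two-charge harmonic oscillator ensemble with fugacity X, if L denotes the random number of charge-1 particles with generating function E[X^L] = L_{N/2}^{(-1/2)}(-X^2)/L_{N/2}^{(-1/2)}(-1), then Var(L) = 4(N/2) - E[L] - E[L]^2 where E[L] = 2 L_{N/2-1}^{(1/2)}(-1)/L_{N/2}^{(-1/2)}(-1). -/
open MeasureTheory Finset

private noncomputable def bb (J k : ℕ) : ℝ :=
  Real.Gamma (J + 1/2) / (Real.Gamma (k + 1/2) * (Nat.factorial (J - k)) * (Nat.factorial k))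

private lemma bb_pos (J k : ℕ) : 0 < bb J k := by
  unfold bb
  have h1 : (0:ℝ) < Real.Gamma (J + 1/2) := Real.Gamma_pos_of_pos (by positivity)
  have h2 : (0:ℝ) < Real.Gamma (k + 1/2) := Real.Gamma_pos_of_pos (by positivity)
  positivity

private lemma lag_neg (J : ℕ) (x : ℝ) :
    lag (-1/2) J (-x) = ∑ k ∈ range (J+1), bb J k * x ^ k := by
  unfold lag bb
  refine Finset.sum_congr rfl fun k _ => ?_
  have hJ : ((J:ℝ) + (-1/2) + 1) = (J:ℝ) + 1/2 := by ring
  have hk : ((k:ℝ) + (-1/2) + 1) = (k:ℝ) + 1/2 := by ring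
  rw [hJ, hk, neg_pow]
  field_simp
  ring_nf
  simp [neg_one_sq, ← pow_mul, mul_comm k 2, pow_mul]

private lemma bb_rec (J k : ℕ) (hk : k < J) :
    2*((k:ℝ)+1)*(2*k+1) * bb J (k+1) = 4*((J:ℝ)-k) * bb J k := by
  unfold bb
  have hG2 : (0:ℝ) < Real.Gamma (k + 1/2) := Real.Gamma_pos_of_pos (by positivity)
  have hzero : ((k:ℝ) + 1/2) ≠ 0 := by positivity
  have hgadd : Real.Gamma ((k:ℝ) + 1 + 1/2) = ((k:ℝ)+1/2) * Real.Gamma (k + 1/2) := by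
    rw [show ((k:ℝ) + 1 + 1/2) = ((k:ℝ) + 1/2) + 1 by ring, Real.Gamma_add_one hzero]
  have hfac1 : (Nat.factorial (k+1) : ℝ) = (k+1) * Nat.factorial k := by
    push_cast [Nat.factorial_succ]; ring
  have hsub : J - k = (J - (k+1)) + 1 := by omega
  have hfac2 : (Nat.factorial (J - k) : ℝ) = ((J:ℝ) - k) * Nat.factorial (J - (k+1)) := by
    rw [hsub, Nat.factorial_succ]
    push_cast [Nat.cast_sub (by omega : k + 1 ≤ J)]
    ring
  push_cast
  rw [hgadd, hfac1, hfac2]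
  have h1 : (Nat.factorial (J - (k+1)) : ℝ) ≠ 0 := Nat.cast_ne_zero.2 (Nat.factorial_ne_zero _)
  have h2 : (Nat.factorial k : ℝ) ≠ 0 := Nat.cast_ne_zero.2 (Nat.factorial_ne_zero _)
  have h3 : ((J:ℝ) - k) ≠ 0 := by
    have : (k:ℝ) < J := by exact_mod_cast hk
    linarith
  field_simp
  ring

private lemma telescope (J : ℕ) :
    ∑ k ∈ range (J+1), (4*(J:ℝ) - 4*k^2 - 2*k) * bb J k = 0 := by
  have key : ∀ k < J, (4*(J:ℝ) - 4*k^2 - 2*k) * bb J k =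
      (-(2*(k:ℝ))*(2*k-1) * bb J k) - (-(2*((k:ℝ)+1))*(2*(k+1)-1) * bb J (k+1)) := by
    intro k hk
    have := bb_rec J k hk
    nlinarith [this]
  rw [Finset.sum_range_succ]
  have h1 : ∑ k ∈ range J, (4*(J:ℝ) - 4*k^2 - 2*k) * bb J k
      = ∑ k ∈ range J, ((fun m : ℕ => -(2*(m:ℝ))*(2*m-1) * bb J m) k
          - (fun m : ℕ => -(2*(m:ℝ))*(2*m-1) * bb J m) (k+1)) := by
    refine Finset.sum_congr rfl fun k hk => ?_
    have := key k (Finset.mem_range.1 hk)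
    simpa using this
  rw [h1, Finset.sum_range_sub' (fun m : ℕ => -(2*(m:ℝ))*(2*m-1) * bb J m) J]
  push_cast
  ring

private lemma sum_k_bb (J : ℕ) (hJ : 1 ≤ J) :
    ∑ k ∈ range (J+1), (2*(k:ℝ)) * bb J k = 2 * lag (1/2) (J-1) (-1) := by
  obtain ⟨J', rfl⟩ : ∃ J', J = J' + 1 := ⟨J - 1, by omega⟩
  rw [show J' + 1 - 1 = J' from rfl]
  unfold lag
  rw [Finset.mul_sum, show J' + 1 + 1 = (J'+1) + 1 from rfl, Finset.sum_range_succ']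
  have h0 : (2*((0:ℕ):ℝ)) * bb (J'+1) 0 = 0 := by norm_num
  rw [h0, add_zero]
  refine Finset.sum_congr rfl fun k hk => ?_
  unfold bb
  have hzero : ((k:ℝ) + 1/2) ≠ 0 := by positivity
  have hgadd : Real.Gamma ((k:ℝ) + 1 + 1/2) = ((k:ℝ)+1/2) * Real.Gamma (k + 1/2) := by
    rw [show ((k:ℝ) + 1 + 1/2) = ((k:ℝ) + 1/2) + 1 by ring, Real.Gamma_add_one hzero]
  have hfac1 : (Nat.factorial (k+1) : ℝ) = (k+1) * Nat.factorial k := by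
    push_cast [Nat.factorial_succ]; ring
  have hsub : J' + 1 - (k+1) = J' - k := by omega
  have hGk : Real.Gamma ((k:ℝ) + 1/2 + 1) = ((k:ℝ)+1/2) * Real.Gamma (k + 1/2) := by
    rw [Real.Gamma_add_one hzero]
  have hGJ : Real.Gamma (((J'+1:ℕ):ℝ) + 1/2) = Real.Gamma ((J':ℝ) + 1/2 + 1) := by
    push_cast; ring_nf
  rw [hsub, hGk, hGJ]
  push_cast
  rw [hgadd, hfac1]
  have hG2 : (0:ℝ) < Real.Gamma (k + 1/2) := Real.Gamma_pos_of_pos (by positivity)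
  have h1 : (Nat.factorial (J' - k) : ℝ) ≠ 0 := Nat.cast_ne_zero.2 (Nat.factorial_ne_zero _)
  have h2 : (Nat.factorial k : ℝ) ≠ 0 := Nat.cast_ne_zero.2 (Nat.factorial_ne_zero _)
  have hk1 : ((k:ℝ) + 1) ≠ 0 := by positivity
  field_simp
  ring_nf
  simp [neg_one_sq, ← pow_mul, mul_comm k 2, pow_mul]

private lemma coeff_extract (J : ℕ) (q : ℕ → ℝ) (c : ℕ → ℝ)
    (key : ∀ X : ℝ, ∑ n ∈ range (2*J+1), q n * X^n = ∑ k ∈ range (J+1), c k * X^(2*k))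
    (g : ℕ → ℝ) :
    ∑ n ∈ range (2*J+1), q n * g n = ∑ k ∈ range (J+1), c k * g (2*k) := by
  classical
  open Polynomial in
  set P : ℝ[X] := ∑ n ∈ range (2*J+1), C (q n) * X^n with hP
  set R : ℝ[X] := ∑ k ∈ range (J+1), C (c k) * X^(2*k) with hR
  have hPR : P = R := by
    apply Polynomial.funext
    intro x
    rw [hP, hR]
    simp only [Polynomial.eval_finset_sum, Polynomial.eval_mul, Polynomial.eval_C,
      Polynomial.eval_pow, Polynomial.eval_X]
    exact key x
  have hPcoeff : ∀ n ∈ range (2*J+1), P.coeff n = q n := by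
    intro n hn
    rw [hP, Polynomial.finset_sum_coeff]
    simp only [Polynomial.coeff_C_mul, Polynomial.coeff_X_pow]
    rw [Finset.sum_congr rfl (fun m _ => by rw [mul_ite, mul_one, mul_zero]),
      Finset.sum_ite_eq (range (2*J+1)) n q, if_pos hn]
  have hRcoeff : ∀ n, R.coeff n = ∑ k ∈ range (J+1), c k * (if n = 2*k then 1 else 0) := by
    intro n
    rw [hR, Polynomial.finset_sum_coeff]
    simp only [Polynomial.coeff_C_mul, Polynomial.coeff_X_pow]
  calc ∑ n ∈ range (2*J+1), q n * g n
      = ∑ n ∈ range (2*J+1), (∑ k ∈ range (J+1), c k * (if n = 2*k then 1 else 0)) * g n := by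
        refine Finset.sum_congr rfl fun n hn => ?_
        rw [← hRcoeff, ← hPR, hPcoeff n hn]
    _ = ∑ k ∈ range (J+1), ∑ n ∈ range (2*J+1), (if n = 2*k then c k * g n else 0) := by
        rw [Finset.sum_congr rfl (fun n _ => Finset.sum_mul ..), Finset.sum_comm]
        refine Finset.sum_congr rfl fun k _ => Finset.sum_congr rfl fun n _ => ?_
        split <;> simp
    _ = ∑ k ∈ range (J+1), c k * g (2*k) := by
        refine Finset.sum_congr rfl fun k hk => ?_
        rw [Finset.sum_ite_eq' (range (2*J+1)) (2*k) (fun n => c k * g n)]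
        rw [if_pos]
        simp only [Finset.mem_range] at hk ⊢
        omega

theorem two_charge_population_variance
    {Ω : Type*} [MeasurableSpace Ω] (μ : Measure Ω) [IsProbabilityMeasure μ]
    (J : ℕ) (hJ : 1 ≤ J) (L : Ω → ℕ)
    (hEven : ∀ ω, Even (L ω)) (hLe : ∀ ω, L ω ≤ 2 * J)
    (hgen : ∀ X : ℝ, ∫ ω, X ^ (L ω) ∂μ = lag (-1/2) J (-X ^ 2) / lag (-1/2) J (-1)) :
    (∫ ω, ((L ω : ℝ)) ^ 2 ∂μ) - (∫ ω, (L ω : ℝ) ∂μ) ^ 2 =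
        4 * J - (∫ ω, (L ω : ℝ) ∂μ) - (∫ ω, (L ω : ℝ) ∂μ) ^ 2 ∧
      (∫ ω, (L ω : ℝ) ∂μ) = 2 * lag (1/2) (J - 1) (-1) / lag (-1/2) J (-1) := by
  classical
  set D := lag (-1/2) J (-1) with hDdef
  have hDsum : D = ∑ k ∈ range (J+1), bb J k := by
    rw [hDdef]
    have := lag_neg J 1
    simpa using this
  have hDpos : 0 < D := by
    rw [hDsum]
    exact Finset.sum_pos (fun k _ => bb_pos J k) ⟨0, Finset.mem_range.2 (by omega)⟩
  -- integrability of (1/2)^L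
  have hintf : Integrable (fun ω => (1/2:ℝ)^(L ω)) μ := by
    by_contra h
    have h0 := integral_undef h
    rw [hgen (1/2)] at h0
    have hpos : 0 < lag (-1/2) J (-(1/2:ℝ)^2) := by
      rw [show (-(1/2:ℝ)^2) = -((1/2:ℝ)^2) from rfl, lag_neg J ((1/2:ℝ)^2)]
      exact Finset.sum_pos (fun k _ => by have := bb_pos J k; positivity) ⟨0, Finset.mem_range.2 (by omega)⟩
    have : 0 < lag (-1/2) J (-(1/2:ℝ)^2) / D := div_pos hpos hDpos
    rw [h0] at this
    exact lt_irrefl 0 this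
  -- AEMeasurability of L
  have hL : AEMeasurable L μ := by
    set h : ℝ → ℕ := fun x => ∑ n ∈ range (2*J+1), if x = (1/2:ℝ)^n then n else 0 with hh
    have hmeas : Measurable h := by
      apply Finset.measurable_sum
      intro n _
      exact Measurable.ite (by exact measurableSet_eq) measurable_const measurable_const
    have hcomp : ∀ ω, h ((1/2:ℝ)^(L ω)) = L ω := by
      intro ω
      have hinj : Function.Injective (fun n : ℕ => (1/2:ℝ)^n) :=
        (pow_right_strictAnti₀ (by norm_num) (by norm_num)).injective
      rw [hh]
      simp only
      have heq : ∀ n, ((1/2:ℝ)^(L ω) = (1/2:ℝ)^n) = (n = L ω) := by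
        intro n
        apply propext
        constructor
        · intro he; exact (hinj he).symm
        · intro he; rw [he]
      simp_rw [heq]
      rw [Finset.sum_ite_eq' (range (2*J+1)) (L ω) (fun n => n)]
      simp [Nat.lt_succ_iff, hLe ω]
    have : AEMeasurable (fun ω => h ((1/2:ℝ)^(L ω))) μ :=
      hmeas.comp_aemeasurable hintf.1.aemeasurable
    convert this using 1
    funext ω
    exact (hcomp ω).symm
  set ν := μ.map L with hν
  haveI : IsProbabilityMeasure ν := Measure.isProbabilityMeasure_map hL
  set q : ℕ → ℝ := fun n => (ν {n}).toReal with hq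
  -- master formula
  have master : ∀ g : ℕ → ℝ, ∫ ω, g (L ω) ∂μ = ∑ n ∈ range (2*J+1), q n * g n := by
    intro g
    have hmeasg : Measurable g := measurable_from_top
    have hν0 : ∀ n, 2*J < n → ν {n} = 0 := by
      intro n hn
      rw [hν, Measure.map_apply_of_aemeasurable hL (measurableSet_singleton n)]
      have he : L ⁻¹' {n} = ∅ := by
        ext ω
        simp only [Set.mem_preimage, Set.mem_singleton_iff, Set.mem_empty_iff_false, iff_false]
        intro he
        have := hLe ω
        omega
      rw [he]; exact measure_empty
    have hae : ∀ᵐ n ∂ν, n ≤ 2*J := by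
      rw [ae_iff, hν, Measure.map_apply_of_aemeasurable hL (by exact trivial)]
      have he : L ⁻¹' {n : ℕ | ¬ n ≤ 2*J} = ∅ := by
        ext ω
        simp only [Set.mem_preimage, Set.mem_setOf_eq, Set.mem_empty_iff_false, iff_false, not_not]
        exact hLe ω
      rw [he]; exact measure_empty
    have hint : Integrable g ν := by
      refine ⟨hmeasg.aestronglyMeasurable, ?_⟩
      apply HasFiniteIntegral.of_bounded (C := ∑ m ∈ range (2*J+1), ‖g m‖)
      filter_upwards [hae] with n hn
      exact Finset.single_le_sum (f := fun m => ‖g m‖) (fun m _ => norm_nonneg _)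
        (Finset.mem_range.2 (by omega))
    rw [← integral_map hL hmeasg.aestronglyMeasurable, integral_countable' hint,
      tsum_eq_sum (s := range (2*J+1)) (fun n hn => by
        rw [measureReal_def, hν0 n (by simpa [Nat.lt_succ_iff] using hn)]; simp)]
    simp [hq, smul_eq_mul, measureReal_def]
  -- generating function identity in coefficient form
  have key : ∀ X : ℝ, ∑ n ∈ range (2*J+1), q n * X^n
      = ∑ k ∈ range (J+1), (bb J k / D) * X^(2*k) := by
    intro X
    have h1 := master (fun n => X^n)
    rw [hgen X] at h1
    rw [← h1, show (-X^2 : ℝ) = -(X^2) from rfl, lag_neg J (X^2)]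
    rw [Finset.sum_div]
    refine Finset.sum_congr rfl fun k _ => ?_
    rw [pow_mul]
    ring
  have final : ∀ g : ℕ → ℝ,
      ∫ ω, g (L ω) ∂μ = ∑ k ∈ range (J+1), (bb J k / D) * g (2*k) := by
    intro g
    rw [master g]
    exact coeff_extract J q (fun k => bb J k / D) key g
  have hE1 : ∫ ω, (L ω : ℝ) ∂μ = ∑ k ∈ range (J+1), (bb J k / D) * (2*(k:ℝ)) := by
    have := final (fun n => (n:ℝ))
    rw [this]
    refine Finset.sum_congr rfl fun k _ => ?_
    push_cast
    ring
  have hE2 : ∫ ω, ((L ω : ℝ))^2 ∂μ = ∑ k ∈ range (J+1), (bb J k / D) * (2*(k:ℝ))^2 := by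
    have := final (fun n => (n:ℝ)^2)
    rw [this]
    refine Finset.sum_congr rfl fun k _ => ?_
    push_cast
    ring
  have hgoal2 : ∫ ω, (L ω : ℝ) ∂μ = 2 * lag (1/2) (J-1) (-1) / D := by
    rw [hE1]
    rw [show ∑ k ∈ range (J+1), (bb J k / D) * (2*(k:ℝ))
        = (∑ k ∈ range (J+1), (2*(k:ℝ)) * bb J k) / D from by
      rw [Finset.sum_div]; exact Finset.sum_congr rfl fun k _ => by ring]
    rw [sum_k_bb J hJ]
  have hsum1 : ∫ ω, ((L ω : ℝ))^2 ∂μ + ∫ ω, (L ω : ℝ) ∂μ = 4*(J:ℝ) := by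
    rw [hE1, hE2, ← Finset.sum_add_distrib]
    have htel := telescope J
    have hterm : ∑ k ∈ range (J+1), ((bb J k / D) * (2*(k:ℝ))^2 + (bb J k / D) * (2*(k:ℝ)))
        = (∑ k ∈ range (J+1), (4*(k:ℝ)^2 + 2*k) * bb J k) / D := by
      rw [Finset.sum_div]
      exact Finset.sum_congr rfl fun k _ => by ring
    rw [hterm]
    have h2 : ∑ k ∈ range (J+1), (4*(k:ℝ)^2 + 2*k) * bb J k = 4*(J:ℝ) * D := by
      have h3 : ∑ k ∈ range (J+1), (4*(J:ℝ)) * bb J k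
          - ∑ k ∈ range (J+1), (4*(k:ℝ)^2 + 2*k) * bb J k
          = ∑ k ∈ range (J+1), (4*(J:ℝ) - 4*k^2 - 2*k) * bb J k := by
        rw [← Finset.sum_sub_distrib]
        exact Finset.sum_congr rfl fun k _ => by ring
      rw [htel] at h3
      have h4 : ∑ k ∈ range (J+1), (4*(J:ℝ)) * bb J k = 4*(J:ℝ) * D := by
        rw [hDsum, Finset.mul_sum]
      linarith
    rw [h2, mul_div_assoc, div_self (ne_of_gt hDpos), mul_one]
  constructor
  · linarith
  · exact hgoal2
end

section
/- For any real m and as n → ∞, Σ_{k=1}^{n} k^{m - 1/2} e^{4√k} = (1/2) n^m e^{4√n} (1 + O(n^{-1/2})). -/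
open Real

lemma hasDerivAt_E (p : ℝ) {x : ℝ} (hx : 0 < x) :
    HasDerivAt (fun y : ℝ => y ^ p * Real.exp (4 * Real.sqrt y))
      (p * x ^ (p-1) * Real.exp (4 * Real.sqrt x) + 2 * x ^ (p - 1/2) * Real.exp (4 * Real.sqrt x)) x := by
  have h1 : HasDerivAt (fun y : ℝ => y ^ p) (p * x ^ (p-1)) x :=
    Real.hasDerivAt_rpow_const (Or.inl hx.ne')
  have h2 : HasDerivAt (fun y : ℝ => Real.exp (4 * Real.sqrt y))
      (Real.exp (4 * Real.sqrt x) * (4 * (1 / (2 * Real.sqrt x)))) x :=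
    ((Real.hasDerivAt_sqrt hx.ne').const_mul 4).exp
  have := h1.mul h2
  refine this.congr_deriv ?_
  have hs : Real.sqrt x = x ^ (1/2 : ℝ) := Real.sqrt_eq_rpow x
  have hsp : (0:ℝ) < Real.sqrt x := Real.sqrt_pos.mpr hx
  have hxp : x ^ (p - 1/2 : ℝ) = x ^ p / x ^ (1/2:ℝ) := Real.rpow_sub hx _ _
  rw [hxp, ← hs]
  field_simp
  ring

lemma helper_bound (s t : ℝ) (hst : s ≤ t) :
    ∃ C > 0, ∀ k : ℕ, 2 ≤ k → ∀ x ∈ Set.Icc ((k:ℝ)-1) (k:ℝ),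
      x ^ s * Real.exp (4 * Real.sqrt x) ≤ C * (k:ℝ) ^ t * Real.exp (4 * Real.sqrt k) := by
  refine ⟨(2:ℝ) ^ |t|, Real.rpow_pos_of_pos two_pos _, ?_⟩
  intro k hk x hx
  obtain ⟨hx1, hx2⟩ := hx
  have hk2 : (2:ℝ) ≤ (k:ℝ) := by exact_mod_cast hk
  have hx1' : (1:ℝ) ≤ x := by linarith
  have hxhalf : (k:ℝ)/2 ≤ x := by linarith
  have hxpos : (0:ℝ) < x := by linarith
  have hkpos : (0:ℝ) < (k:ℝ) := by linarith
  have h1 : x ^ s ≤ x ^ t := Real.rpow_le_rpow_of_exponent_le hx1' hst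
  have h2 : x ^ t ≤ (2:ℝ) ^ |t| * (k:ℝ) ^ t := by
    rcases le_or_gt 0 t with ht | ht
    · have hxt : x ^ t ≤ (k:ℝ) ^ t := Real.rpow_le_rpow hxpos.le hx2 ht
      have h21 : (1:ℝ) ≤ (2:ℝ) ^ |t| := Real.one_le_rpow one_le_two (abs_nonneg t)
      nlinarith [Real.rpow_nonneg hkpos.le t]
    · have hxt : x ^ t ≤ ((k:ℝ)/2) ^ t :=
        Real.rpow_le_rpow_of_nonpos (by positivity) hxhalf ht.le
      have hd : ((k:ℝ)/2) ^ t = (2:ℝ) ^ (-t) * (k:ℝ) ^ t := by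
        rw [Real.div_rpow hkpos.le (by norm_num : (0:ℝ) ≤ 2), Real.rpow_neg (by norm_num : (0:ℝ) ≤ 2)]
        field_simp
      rw [abs_of_neg ht]
      rw [hd] at hxt
      exact hxt
  have h3 : Real.exp (4 * Real.sqrt x) ≤ Real.exp (4 * Real.sqrt k) :=
    Real.exp_le_exp.mpr (by nlinarith [Real.sqrt_le_sqrt hx2])
  calc x ^ s * Real.exp (4 * Real.sqrt x) ≤ ((2:ℝ) ^ |t| * (k:ℝ) ^ t) * Real.exp (4 * Real.sqrt k) := by
        apply mul_le_mul (le_trans h1 h2) h3 (Real.exp_pos _).le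
        positivity
    _ = (2:ℝ) ^ |t| * (k:ℝ) ^ t * Real.exp (4 * Real.sqrt k) := by ring

lemma lemmaB (m : ℝ) : ∃ C > 0, ∀ k : ℕ, 2 ≤ k →
    |(k:ℝ) ^ (m - 1/2) * Real.exp (4 * Real.sqrt k) -
      ((1/2) * ((k:ℝ)^m * Real.exp (4*Real.sqrt (k:ℝ))) -
        (1/2) * (((k:ℝ)-1)^m * Real.exp (4*Real.sqrt ((k:ℝ)-1))))|
    ≤ C * (k:ℝ)^(m-1) * Real.exp (4*Real.sqrt (k:ℝ)) := by
  obtain ⟨C₁, hC₁, hB₁⟩ := helper_bound (m - 3/2) (m-1) (by linarith)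
  obtain ⟨C₂, hC₂, hB₂⟩ := helper_bound (m - 1) (m-1) le_rfl
  set Bg : ℝ := |m - 1/2| * C₁ + 2 * C₂ with hBg
  clear_value Bg
  have hBgnn : 0 ≤ Bg := by rw [hBg]; positivity
  have hmC : 0 ≤ |m|/2 * C₂ := mul_nonneg (by positivity) hC₂.le
  refine ⟨Bg + |m|/2 * C₂ + 1, by linarith, ?_⟩
  intro k hk
  have hk2 : (2:ℝ) ≤ (k:ℝ) := by exact_mod_cast hk
  have hkpos : (0:ℝ) < (k:ℝ) := by linarith
  set g : ℝ → ℝ := fun x => x ^ (m - 1/2) * Real.exp (4 * Real.sqrt x) with hgdef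
  set F : ℝ → ℝ := fun x => (1/2) * (x ^ m * Real.exp (4 * Real.sqrt x)) with hFdef
  set D : ℝ := (k:ℝ)^(m-1) * Real.exp (4*Real.sqrt (k:ℝ)) with hD
  clear_value D
  have hDpos : 0 < D := by
    rw [hD]; positivity
  have hmem : ∀ x ∈ Set.Icc ((k:ℝ)-1) (k:ℝ), (0:ℝ) < x := fun x hx => by
    have := hx.1; linarith
  have hkmem : (k:ℝ) ∈ Set.Icc ((k:ℝ)-1) (k:ℝ) := ⟨by linarith, le_refl _⟩
  have hk1mem : (k:ℝ)-1 ∈ Set.Icc ((k:ℝ)-1) (k:ℝ) := ⟨le_refl _, by linarith⟩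
  have hb2D : ∀ x ∈ Set.Icc ((k:ℝ)-1) (k:ℝ),
      x^(m-1) * Real.exp (4*Real.sqrt x) ≤ C₂ * D := by
    intro x hx
    have := hB₂ k hk x hx
    rw [hD]; linarith [this]
  -- bound |g x - g k| on the interval
  have hgderiv : ∀ x ∈ Set.Icc ((k:ℝ)-1) (k:ℝ),
      HasDerivWithinAt g ((m-1/2) * x^(m-3/2) * Real.exp (4*Real.sqrt x)
        + 2 * x^(m-1) * Real.exp (4*Real.sqrt x)) (Set.Icc ((k:ℝ)-1) (k:ℝ)) x := by
    intro x hx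
    have h := hasDerivAt_E (m - 1/2) (hmem x hx)
    have e1 : m - 1/2 - 1 = m - 3/2 := by ring
    have e2 : m - 1/2 - 1/2 = m - 1 := by ring
    rw [e1, e2] at h
    exact h.hasDerivWithinAt
  have hgbound : ∀ x ∈ Set.Icc ((k:ℝ)-1) (k:ℝ),
      ‖(m-1/2) * x^(m-3/2) * Real.exp (4*Real.sqrt x)
        + 2 * x^(m-1) * Real.exp (4*Real.sqrt x)‖ ≤ Bg * D := by
    intro x hx
    have b1 := hB₁ k hk x hx
    have b2 := hB₂ k hk x hx
    have hxp := hmem x hx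
    have hA : (0:ℝ) ≤ x^(m-3/2) := by positivity
    have hBp : (0:ℝ) ≤ x^(m-1) := by positivity
    have hE : (0:ℝ) ≤ Real.exp (4*Real.sqrt x) := (Real.exp_pos _).le
    rw [Real.norm_eq_abs]
    have e1 : |(m-1/2) * x^(m-3/2) * Real.exp (4*Real.sqrt x)|
        = |m-1/2| * (x^(m-3/2) * Real.exp (4*Real.sqrt x)) := by
      rw [abs_mul, abs_mul, abs_of_nonneg hA, abs_of_nonneg hE, mul_assoc]
    have e2 : |2 * x^(m-1) * Real.exp (4*Real.sqrt x)|
        = 2 * (x^(m-1) * Real.exp (4*Real.sqrt x)) := by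
      rw [abs_mul, abs_mul, abs_of_nonneg hBp, abs_of_nonneg hE]
      norm_num [mul_assoc]
    refine (abs_add_le _ _).trans ?_
    rw [e1, e2, hBg, hD]
    have habs : (0:ℝ) ≤ |m - 1/2| := abs_nonneg _
    nlinarith
  have hgMVT : ∀ x ∈ Set.Icc ((k:ℝ)-1) (k:ℝ), |g x - g (k:ℝ)| ≤ Bg * D := by
    intro x hx
    have hmvt := Convex.norm_image_sub_le_of_norm_hasDerivWithin_le hgderiv hgbound
      (convex_Icc _ _) hkmem hx
    rw [Real.norm_eq_abs, Real.norm_eq_abs] at hmvt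
    have h1 : |x - (k:ℝ)| ≤ 1 := by
      rw [abs_le]; exact ⟨by linarith [hx.1], by linarith [hx.2]⟩
    calc |g x - g (k:ℝ)| ≤ Bg * D * |x - (k:ℝ)| := hmvt
      _ ≤ Bg * D * 1 := mul_le_mul_of_nonneg_left h1 (mul_nonneg hBgnn hDpos.le)
      _ = Bg * D := by ring
  -- MVT for phi x = F x - g k * x
  set B : ℝ := Bg * D + |m|/2 * (C₂ * D) with hBdef
  clear_value B
  have hphiMVT : |(F (k:ℝ) - F ((k:ℝ)-1)) - g (k:ℝ)| ≤ B := by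
    have hderiv : ∀ x ∈ Set.Icc ((k:ℝ)-1) (k:ℝ),
        HasDerivWithinAt (fun y => F y - g (k:ℝ) * y)
          ((g x + (m/2) * (x^(m-1) * Real.exp (4*Real.sqrt x))) - g (k:ℝ))
          (Set.Icc ((k:ℝ)-1) (k:ℝ)) x := by
      intro x hx
      have h := (hasDerivAt_E m (hmem x hx)).const_mul (1/2 : ℝ)
      have h2 : HasDerivAt (fun y => g (k:ℝ) * y) (g (k:ℝ)) x := by
        simpa using (hasDerivAt_id x).const_mul (g (k:ℝ))
      have h3 := h.sub h2
      have heq : (1/2 : ℝ) * (m * x ^ (m-1) * Real.exp (4 * Real.sqrt x)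
            + 2 * x ^ (m - 1/2) * Real.exp (4 * Real.sqrt x)) - g (k:ℝ)
          = (g x + (m/2) * (x^(m-1) * Real.exp (4*Real.sqrt x))) - g (k:ℝ) := by
        simp only [hgdef]
        ring
      rw [heq] at h3
      exact h3.hasDerivWithinAt
    have hbound : ∀ x ∈ Set.Icc ((k:ℝ)-1) (k:ℝ),
        ‖(g x + (m/2) * (x^(m-1) * Real.exp (4*Real.sqrt x))) - g (k:ℝ)‖ ≤ B := by
      intro x hx
      rw [Real.norm_eq_abs]
      have h1 := hgMVT x hx
      have h2 := hb2D x hx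
      have hBp : (0:ℝ) ≤ x^(m-1) * Real.exp (4*Real.sqrt x) := by
        have := hmem x hx; positivity
      have e3 : |(m/2) * (x^(m-1) * Real.exp (4*Real.sqrt x))|
          = |m|/2 * (x^(m-1) * Real.exp (4*Real.sqrt x)) := by
        rw [abs_mul, abs_of_nonneg hBp, abs_div]
        norm_num
      have tri : |(g x + (m/2) * (x^(m-1) * Real.exp (4*Real.sqrt x))) - g (k:ℝ)|
          ≤ |g x - g (k:ℝ)| + |(m/2) * (x^(m-1) * Real.exp (4*Real.sqrt x))| := by
        have : (g x + (m/2) * (x^(m-1) * Real.exp (4*Real.sqrt x))) - g (k:ℝ)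
            = (g x - g (k:ℝ)) + (m/2) * (x^(m-1) * Real.exp (4*Real.sqrt x)) := by ring
        rw [this]
        exact abs_add_le _ _
      rw [e3] at tri
      have habs : (0:ℝ) ≤ |m| := abs_nonneg _
      rw [hBdef]
      have h4 := mul_le_mul_of_nonneg_left h2 (by positivity : (0:ℝ) ≤ |m|/2)
      refine tri.trans ?_
      linarith
    have hmvt := Convex.norm_image_sub_le_of_norm_hasDerivWithin_le hderiv hbound
      (convex_Icc _ _) hk1mem hkmem
    rw [Real.norm_eq_abs, Real.norm_eq_abs] at hmvt
    have e4 : (k:ℝ) - ((k:ℝ)-1) = 1 := by ring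
    have e5 : (F (k:ℝ) - g (k:ℝ) * (k:ℝ)) - (F ((k:ℝ)-1) - g (k:ℝ) * ((k:ℝ)-1))
        = (F (k:ℝ) - F ((k:ℝ)-1)) - g (k:ℝ) := by ring
    rw [e5, e4] at hmvt
    simpa using hmvt
  have hgk : g (k:ℝ) = (k:ℝ) ^ (m - 1/2) * Real.exp (4 * Real.sqrt (k:ℝ)) := rfl
  have hFk : F (k:ℝ) = (1/2) * ((k:ℝ)^m * Real.exp (4*Real.sqrt (k:ℝ))) := rfl
  have hFk1 : F ((k:ℝ)-1) = (1/2) * (((k:ℝ)-1)^m * Real.exp (4*Real.sqrt ((k:ℝ)-1))) := rfl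
  rw [← hgk, ← hFk, ← hFk1, abs_sub_comm]
  refine hphiMVT.trans ?_
  have hstep : B ≤ (Bg + |m|/2 * C₂ + 1) * D := by
    rw [hBdef]; nlinarith [hDpos]
  refine hstep.trans ?_
  rw [hD, ← mul_assoc]


lemma grow (A β : ℝ) : ∃ N : ℕ, 1 ≤ N ∧ ∀ n : ℕ, N ≤ n →
    A ≤ (n:ℝ) ^ β * Real.exp (4 * Real.sqrt n) := by
  refine ⟨⌈A^2⌉₊ + ⌈(2*|β|)^4⌉₊ + 1, by omega, ?_⟩
  intro n hn
  have hA2 : (A^2 : ℝ) ≤ (n:ℝ) := by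
    calc (A^2:ℝ) ≤ (⌈A^2⌉₊ : ℝ) := Nat.le_ceil _
      _ ≤ (n:ℝ) := by exact_mod_cast le_trans (by omega) hn
  have hβ4 : ((2*|β|)^4 : ℝ) ≤ (n:ℝ) := by
    calc ((2*|β|)^4:ℝ) ≤ (⌈(2*|β|)^4⌉₊ : ℝ) := Nat.le_ceil _
      _ ≤ (n:ℝ) := by exact_mod_cast le_trans (by omega) hn
  have hn1 : (1:ℝ) ≤ (n:ℝ) := by exact_mod_cast Nat.one_le_iff_ne_zero.mpr (by omega)
  have hnpos : (0:ℝ) < (n:ℝ) := by linarith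
  set t : ℝ := (n:ℝ) ^ ((1:ℝ)/4) with ht
  have ht1 : (1:ℝ) ≤ t := Real.one_le_rpow hn1 (by norm_num)
  have htpos : (0:ℝ) < t := by linarith
  have ht2 : 2*|β| ≤ t := by
    have h1 : ((2*|β|)^4 : ℝ) ^ ((1:ℝ)/4) ≤ t :=
      Real.rpow_le_rpow (by positivity) hβ4 (by norm_num)
    have h2 : ((2*|β|)^4 : ℝ) ^ ((1:ℝ)/4) = 2*|β| := by
      rw [← Real.rpow_natCast (2*|β|) 4, ← Real.rpow_mul (by positivity)]
      norm_num
    linarith [h2 ▸ h1]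
  have hsq : Real.sqrt (n:ℝ) = t^2 := by
    rw [Real.sqrt_eq_rpow, ht, ← Real.rpow_natCast ((n:ℝ) ^ ((1:ℝ)/4)) 2,
      ← Real.rpow_mul hnpos.le]
    norm_num
  have hlogt : Real.log (n:ℝ) = 4 * Real.log t := by
    rw [ht, Real.log_rpow hnpos]; ring
  have hlog_le : Real.log (n:ℝ) ≤ 4 * t := by
    rw [hlogt]
    have := Real.log_le_sub_one_of_pos htpos
    linarith
  have hlognn : 0 ≤ Real.log (n:ℝ) := Real.log_nonneg hn1
  have hkey : |β| * Real.log (n:ℝ) ≤ 2 * Real.sqrt (n:ℝ) := by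
    rw [hsq]
    have h1 : |β| * Real.log (n:ℝ) ≤ |β| * (4*t) :=
      mul_le_mul_of_nonneg_left hlog_le (abs_nonneg _)
    nlinarith [abs_nonneg β]
  have hrpow : Real.exp (-(|β| * Real.log (n:ℝ))) ≤ (n:ℝ) ^ β := by
    rw [Real.rpow_def_of_pos hnpos]
    apply Real.exp_le_exp.mpr
    have : -|β| ≤ β := neg_abs_le β
    nlinarith
  have hexpA : A ≤ Real.exp (2 * Real.sqrt (n:ℝ)) := by
    have h1 : A ≤ Real.sqrt (n:ℝ) := by
      have := Real.sqrt_le_sqrt hA2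
      rw [Real.sqrt_sq_eq_abs] at this
      exact (le_abs_self A).trans this
    have h2 := Real.add_one_le_exp (2 * Real.sqrt (n:ℝ))
    have h3 : 0 ≤ Real.sqrt (n:ℝ) := Real.sqrt_nonneg _
    linarith
  calc A ≤ Real.exp (2 * Real.sqrt (n:ℝ)) := hexpA
    _ ≤ Real.exp (-(|β| * Real.log (n:ℝ)) + 4 * Real.sqrt (n:ℝ)) := by
        apply Real.exp_le_exp.mpr; linarith
    _ = Real.exp (-(|β| * Real.log (n:ℝ))) * Real.exp (4 * Real.sqrt (n:ℝ)) := Real.exp_add _ _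
    _ ≤ (n:ℝ) ^ β * Real.exp (4 * Real.sqrt n) :=
        mul_le_mul_of_nonneg_right hrpow (Real.exp_pos _).le

lemma telescope_s14 (f : ℕ → ℝ) (K : ℕ) (hK : 1 ≤ K) :
    ∀ n : ℕ, K - 1 ≤ n → ∑ k ∈ Finset.Icc K n, (f k - f (k-1)) = f n - f (K-1) := by
  intro n hn
  induction n, hn using Nat.le_induction with
  | base =>
      rw [Finset.Icc_eq_empty (by omega)]
      simp
  | succ n hn ih =>
      rw [Finset.sum_Icc_succ_top (by omega), ih]
      simp only [Nat.add_sub_cancel]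
      ring

lemma lemmaA (s : ℝ) : ∃ C > 0, ∃ N : ℕ, ∀ n : ℕ, N ≤ n →
    ∑ k ∈ Finset.Icc 1 n, (k:ℝ) ^ s * Real.exp (4 * Real.sqrt k)
      ≤ C * (n:ℝ) ^ (s + 1/2) * Real.exp (4 * Real.sqrt n) := by
  obtain ⟨C₁, hC₁, hB⟩ := lemmaB (s + 1/2)
  set fN : ℕ → ℝ := fun k => (1/2) * ((k:ℝ)^(s+1/2) * Real.exp (4*Real.sqrt (k:ℝ))) with hfN
  set K : ℕ := max 2 (⌈(2*C₁)^2⌉₊ + 1) with hK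
  have hK2 : 2 ≤ K := le_max_left _ _
  -- for k ≥ K, a_k ≤ 2 * (fN k - fN (k-1))
  have hkey : ∀ k : ℕ, K ≤ k →
      (k:ℝ) ^ s * Real.exp (4 * Real.sqrt k) ≤ 2 * (fN k - fN (k-1)) := by
    intro k hk
    have hk2 : 2 ≤ k := le_trans hK2 hk
    have hkR : (2:ℝ) ≤ (k:ℝ) := by exact_mod_cast hk2
    have hkpos : (0:ℝ) < (k:ℝ) := by linarith
    have hcast : ((k-1 : ℕ) : ℝ) = (k:ℝ) - 1 := by
      have : 1 ≤ k := by omega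
      push_cast [this]; ring
    have hBk := hB k hk2
    have he1 : s + 1/2 - 1/2 = s := by ring
    have he2 : s + 1/2 - 1 = s - 1/2 := by ring
    rw [he1, he2] at hBk
    -- error term bound: C₁ * k^(s-1/2) * e ≤ (1/2) * k^s * e
    have herr : C₁ * (k:ℝ)^(s-1/2) * Real.exp (4*Real.sqrt (k:ℝ))
        ≤ (1/2) * ((k:ℝ)^s * Real.exp (4*Real.sqrt (k:ℝ))) := by
      have hsplit : (k:ℝ)^(s-1/2) = (k:ℝ)^s * (k:ℝ)^(-(1/2):ℝ) := by
        rw [← Real.rpow_add hkpos]; ring_nf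
      have hsqrtC : 2*C₁ ≤ Real.sqrt (k:ℝ) := by
        have h1 : ((2*C₁)^2 : ℝ) ≤ (k:ℝ) := by
          calc ((2*C₁)^2:ℝ) ≤ (⌈(2*C₁)^2⌉₊:ℝ) := Nat.le_ceil _
            _ ≤ (K:ℝ) := by
                have : ⌈(2*C₁)^2⌉₊ + 1 ≤ K := le_max_right _ _
                exact_mod_cast le_trans (by omega) this
            _ ≤ (k:ℝ) := by exact_mod_cast hk
        have := Real.sqrt_le_sqrt h1
        rwa [Real.sqrt_sq_eq_abs, abs_of_pos (by positivity)] at this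
      have hC2 : (k:ℝ)^(-(1/2):ℝ) * C₁ ≤ 1/2 := by
        have hks : (0:ℝ) < Real.sqrt (k:ℝ) := Real.sqrt_pos.mpr hkpos
        have hinv : (k:ℝ)^(-(1/2):ℝ) = 1 / Real.sqrt (k:ℝ) := by
          rw [Real.rpow_neg hkpos.le, Real.sqrt_eq_rpow]
          norm_num
        rw [hinv, div_mul_eq_mul_div, div_le_iff₀ hks]
        nlinarith
      have hpos : (0:ℝ) ≤ (k:ℝ)^s * Real.exp (4*Real.sqrt (k:ℝ)) := by positivity
      calc C₁ * (k:ℝ)^(s-1/2) * Real.exp (4*Real.sqrt (k:ℝ))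
          = ((k:ℝ)^(-(1/2):ℝ) * C₁) * ((k:ℝ)^s * Real.exp (4*Real.sqrt (k:ℝ))) := by
            rw [hsplit]; ring
        _ ≤ (1/2) * ((k:ℝ)^s * Real.exp (4*Real.sqrt (k:ℝ))) :=
            mul_le_mul_of_nonneg_right hC2 hpos
    have habs := (abs_le.mp hBk).2
    rw [hfN]
    simp only [hcast]
    nlinarith [habs, herr]
  -- split the sum
  set A₀ : ℝ := ∑ k ∈ Finset.Ioc 0 (K-1), (k:ℝ) ^ s * Real.exp (4 * Real.sqrt k) with hA₀
  obtain ⟨N₁, hN₁1, hN₁⟩ := grow A₀ (s + 1/2)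
  refine ⟨2, by norm_num, max K N₁, ?_⟩
  intro n hn
  have hnK : K ≤ n := le_trans (le_max_left _ _) hn
  have hnN₁ : N₁ ≤ n := le_trans (le_max_right _ _) hn
  have hsplit : ∑ k ∈ Finset.Icc 1 n, (k:ℝ) ^ s * Real.exp (4 * Real.sqrt k)
      = A₀ + ∑ k ∈ Finset.Icc K n, (k:ℝ) ^ s * Real.exp (4 * Real.sqrt k) := by
    have h0 : Finset.Icc 1 n = Finset.Ioc 0 n := by
      ext x; simp [Finset.mem_Icc, Finset.mem_Ioc]; omega
    have h1 : Finset.Icc K n = Finset.Ioc (K-1) n := by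
      ext x; simp [Finset.mem_Icc, Finset.mem_Ioc]; omega
    rw [hA₀, h0, h1]
    exact (Finset.sum_Ioc_consecutive _ (by omega) (by omega)).symm
  have hsum2 : ∑ k ∈ Finset.Icc K n, (k:ℝ) ^ s * Real.exp (4 * Real.sqrt k)
      ≤ 2 * (fN n - fN (K-1)) := by
    calc ∑ k ∈ Finset.Icc K n, (k:ℝ) ^ s * Real.exp (4 * Real.sqrt k)
        ≤ ∑ k ∈ Finset.Icc K n, 2 * (fN k - fN (k-1)) := by
          apply Finset.sum_le_sum
          intro k hk
          exact hkey k (Finset.mem_Icc.mp hk).1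
      _ = 2 * (fN n - fN (K-1)) := by
          rw [← Finset.mul_sum, telescope_s14 fN K (by omega) n (by omega)]
  have hfNnn : 0 ≤ fN (K-1) := by
    rw [hfN]
    positivity
  have hA₀n : A₀ ≤ (n:ℝ) ^ (s + 1/2) * Real.exp (4 * Real.sqrt n) := hN₁ n hnN₁
  have h2fN : 2 * fN n = (n:ℝ)^(s+1/2) * Real.exp (4*Real.sqrt (n:ℝ)) := by
    rw [hfN]; ring
  calc ∑ k ∈ Finset.Icc 1 n, (k:ℝ) ^ s * Real.exp (4 * Real.sqrt k)
      = A₀ + ∑ k ∈ Finset.Icc K n, (k:ℝ) ^ s * Real.exp (4 * Real.sqrt k) := hsplit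
    _ ≤ A₀ + 2 * (fN n - fN (K-1)) := by linarith
    _ ≤ A₀ + 2 * fN n := by linarith
    _ ≤ (n:ℝ)^(s+1/2) * Real.exp (4*Real.sqrt (n:ℝ)) + (n:ℝ)^(s+1/2) * Real.exp (4*Real.sqrt (n:ℝ)) := by
        rw [← h2fN] at hA₀n ⊢
        linarith [hA₀n]
    _ = 2 * (n:ℝ) ^ (s + 1/2) * Real.exp (4 * Real.sqrt n) := by ring


theorem sum_rpow_exp_sqrt_asymp (m : ℝ) :
    ∃ C > 0, ∃ N0 : ℕ, ∀ n : ℕ, N0 ≤ n →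
      |(∑ k ∈ Finset.Icc 1 n, (k : ℝ) ^ (m - 1/2) * Real.exp (4 * Real.sqrt k)) -
          (1/2) * (n : ℝ) ^ m * Real.exp (4 * Real.sqrt n)| ≤
        C * (n : ℝ) ^ (m - 1/2) * Real.exp (4 * Real.sqrt n) := by
  obtain ⟨C₁, hC₁, hB⟩ := lemmaB m
  obtain ⟨C₂, hC₂, N₂, hA⟩ := lemmaA (m-1)
  set a : ℕ → ℝ := fun k => (k:ℝ) ^ (m - 1/2) * Real.exp (4 * Real.sqrt (k:ℝ)) with ha
  set fN : ℕ → ℝ := fun k => (1/2) * ((k:ℝ)^m * Real.exp (4*Real.sqrt (k:ℝ))) with hfN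
  obtain ⟨N₃, hN₃1, hN₃⟩ := grow (|a 1 - fN 1|) (m - 1/2)
  refine ⟨1 + C₁*C₂, by positivity, max (max 2 N₂) N₃, ?_⟩
  intro n hn
  have hn2 : 2 ≤ n := le_trans (le_trans (le_max_left _ _) (le_max_left _ _)) hn
  have hnN₂ : N₂ ≤ n := le_trans (le_trans (le_max_right _ _) (le_max_left _ _)) hn
  have hnN₃ : N₃ ≤ n := le_trans (le_max_right _ _) hn
  have hsum : ∑ k ∈ Finset.Icc 1 n, a k = a 1 + ∑ k ∈ Finset.Icc 2 n, a k := by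
    have h0 : Finset.Icc 1 n = Finset.Ioc 0 n := by
      ext x; simp [Finset.mem_Icc, Finset.mem_Ioc]; omega
    have h1 : Finset.Icc 2 n = Finset.Ioc 1 n := by
      ext x; simp [Finset.mem_Icc, Finset.mem_Ioc]; omega
    have h2 : Finset.Ioc 0 1 = ({1} : Finset ℕ) := by
      ext x; simp only [Finset.mem_Ioc, Finset.mem_singleton]; omega
    rw [h0, h1, ← Finset.sum_Ioc_consecutive _ (zero_le_one) (by omega : 1 ≤ n), h2,
      Finset.sum_singleton]
  have htel : ∑ k ∈ Finset.Icc 2 n, (fN k - fN (k-1)) = fN n - fN 1 := by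
    have := telescope_s14 fN 2 (by omega) n (by omega)
    simpa using this
  have hdiff : (∑ k ∈ Finset.Icc 1 n, a k) - fN n
      = (a 1 - fN 1) + ∑ k ∈ Finset.Icc 2 n, (a k - (fN k - fN (k-1))) := by
    rw [hsum, Finset.sum_sub_distrib, htel]; ring
  have hterm : ∀ k ∈ Finset.Icc 2 n, |a k - (fN k - fN (k-1))|
      ≤ C₁ * ((k:ℝ)^(m-1) * Real.exp (4*Real.sqrt (k:ℝ))) := by
    intro k hk
    obtain ⟨hk2, _⟩ := Finset.mem_Icc.mp hk
    have hcast : ((k-1:ℕ):ℝ) = (k:ℝ)-1 := by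
      have h1 : 1 ≤ k := by omega
      push_cast [h1]; ring
    have hBk := hB k hk2
    rw [ha, hfN]
    simp only [hcast]
    calc |(k:ℝ) ^ (m - 1/2) * Real.exp (4 * Real.sqrt (k:ℝ)) -
        ((1/2) * ((k:ℝ)^m * Real.exp (4*Real.sqrt (k:ℝ))) -
          (1/2) * (((k:ℝ)-1)^m * Real.exp (4*Real.sqrt ((k:ℝ)-1))))|
        ≤ C₁ * (k:ℝ)^(m-1) * Real.exp (4*Real.sqrt (k:ℝ)) := hBk
      _ = C₁ * ((k:ℝ)^(m-1) * Real.exp (4*Real.sqrt (k:ℝ))) := by ring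
  have habs : |∑ k ∈ Finset.Icc 2 n, (a k - (fN k - fN (k-1)))|
      ≤ ∑ k ∈ Finset.Icc 2 n, C₁ * ((k:ℝ)^(m-1) * Real.exp (4*Real.sqrt (k:ℝ))) :=
    (Finset.abs_sum_le_sum_abs _ _).trans (Finset.sum_le_sum hterm)
  have hsub : ∑ k ∈ Finset.Icc 2 n, C₁ * ((k:ℝ)^(m-1) * Real.exp (4*Real.sqrt (k:ℝ)))
      ≤ C₁ * ∑ k ∈ Finset.Icc 1 n, (k:ℝ)^(m-1) * Real.exp (4*Real.sqrt (k:ℝ)) := by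
    rw [Finset.mul_sum]
    apply Finset.sum_le_sum_of_subset_of_nonneg
    · intro x hx
      simp only [Finset.mem_Icc] at hx ⊢
      omega
    · intro k _ _
      have : (0:ℝ) ≤ (k:ℝ)^(m-1) * Real.exp (4*Real.sqrt (k:ℝ)) := by positivity
      positivity
  have hA' : ∑ k ∈ Finset.Icc 1 n, (k:ℝ)^(m-1) * Real.exp (4*Real.sqrt (k:ℝ))
      ≤ C₂ * (n:ℝ)^(m-1/2) * Real.exp (4*Real.sqrt (n:ℝ)) := by
    have := hA n hnN₂
    have he : m - 1 + 1/2 = m - 1/2 := by ring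
    rwa [he] at this
  have hgrow := hN₃ n hnN₃
  have hgoal1 : (∑ k ∈ Finset.Icc 1 n, (k:ℝ) ^ (m - 1/2) * Real.exp (4 * Real.sqrt (k:ℝ)))
      = ∑ k ∈ Finset.Icc 1 n, a k := rfl
  have hgoal2 : (1/2) * (n:ℝ) ^ m * Real.exp (4 * Real.sqrt (n:ℝ)) = fN n := by
    rw [hfN]; ring
  rw [hgoal1, hgoal2, hdiff]
  have hC₁C₂ : C₁ * (C₂ * (n:ℝ)^(m-1/2) * Real.exp (4*Real.sqrt (n:ℝ)))
      = C₁*C₂ * ((n:ℝ)^(m-1/2) * Real.exp (4*Real.sqrt (n:ℝ))) := by ring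
  have hchain : |∑ k ∈ Finset.Icc 2 n, (a k - (fN k - fN (k-1)))|
      ≤ C₁*C₂ * ((n:ℝ)^(m-1/2) * Real.exp (4*Real.sqrt (n:ℝ))) := by
    refine habs.trans (hsub.trans ?_)
    rw [← hC₁C₂]
    exact mul_le_mul_of_nonneg_left hA' hC₁.le
  calc |(a 1 - fN 1) + ∑ k ∈ Finset.Icc 2 n, (a k - (fN k - fN (k-1)))|
      ≤ |a 1 - fN 1| + |∑ k ∈ Finset.Icc 2 n, (a k - (fN k - fN (k-1)))| := abs_add_le _ _
    _ ≤ (n:ℝ)^(m-1/2) * Real.exp (4*Real.sqrt (n:ℝ))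
        + C₁*C₂ * ((n:ℝ)^(m-1/2) * Real.exp (4*Real.sqrt (n:ℝ))) := by
        exact add_le_add hgrow hchain
    _ = (1 + C₁*C₂) * (n:ℝ)^(m-1/2) * Real.exp (4*Real.sqrt (n:ℝ)) := by ring
end
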